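/- Let k ≥ 2 and n ≥ k. Every directed (k−1)-tree D on n vertices is Dₖ-saturated and has exactly C(n−k+1, 2) + (k−1)(2n−k) arcs, where C(·,·) denotes the binomial coefficient. -/

import Mathlib

/-- A finite strict digraph: a finite vertex set and a finite set of arcs
(ordered pairs), with no loops, and all arc endpoints in the vertex set. -/
structure Dgraph where
  verts : Finset ℕ
  arcs : Finset (ℕ × ℕ)
  arcs_mem : ∀ e ∈ arcs, e.1 ∈ verts ∧ e.2 ∈ verts
  no_loops : ∀ e ∈ arcs, e.1 ≠ e.2

namespace Dgraph

/-- `H` is a subdigraph of `D`. -/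
def IsSubdigraph (H D : Dgraph) : Prop := H.verts ⊆ D.verts ∧ H.arcs ⊆ D.arcs

/-- Reachability by a directed path. -/
def Reach (D : Dgraph) (u v : ℕ) : Prop :=
  Relation.ReflTransGen (fun a b => (a, b) ∈ D.arcs) u v

/-- `D` is strongly connected. -/
def StronglyConnected (D : Dgraph) : Prop :=
  ∀ u ∈ D.verts, ∀ v ∈ D.verts, D.Reach u v

/-- Deletion of a set of vertices. -/
def delete (D : Dgraph) (S : Finset ℕ) : Dgraph where
  verts := D.verts \ S
  arcs := D.arcs.filter (fun e => e.1 ∉ S ∧ e.2 ∉ S)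
  arcs_mem := by
    intro e he
    simp only [Finset.mem_filter] at he
    have h := D.arcs_mem e he.1
    simp only [Finset.mem_sdiff]
    exact ⟨⟨h.1, he.2.1⟩, ⟨h.2, he.2.2⟩⟩
  no_loops := fun e he => D.no_loops e (Finset.mem_filter.mp he).1

/-- The subdigraph induced by a set of vertices. -/
def induce (D : Dgraph) (S : Finset ℕ) : Dgraph where
  verts := D.verts ∩ S
  arcs := D.arcs.filter (fun e => e.1 ∈ S ∧ e.2 ∈ S)
  arcs_mem := by
    intro e he
    simp only [Finset.mem_filter] at he
    have h := D.arcs_mem e he.1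
    simp only [Finset.mem_inter]
    exact ⟨⟨h.1, he.2.1⟩, ⟨h.2, he.2.2⟩⟩
  no_loops := fun e he => D.no_loops e (Finset.mem_filter.mp he).1

/-- The complete digraph on a vertex set `S`. -/
def completeOn (S : Finset ℕ) : Dgraph where
  verts := S
  arcs := (S ×ˢ S).filter (fun e => e.1 ≠ e.2)
  arcs_mem := by
    intro e he
    simp only [Finset.mem_filter, Finset.mem_product] at he
    exact ⟨he.1.1, he.1.2⟩
  no_loops := fun e he => (Finset.mem_filter.mp he).2

/-- Adding the arc `(u, v)` (when this is a legal new arc). -/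
def addArc (D : Dgraph) (u v : ℕ) : Dgraph where
  verts := D.verts
  arcs := if u ∈ D.verts ∧ v ∈ D.verts ∧ u ≠ v then insert (u, v) D.arcs else D.arcs
  arcs_mem := by
    intro e he
    split at he
    · rcases Finset.mem_insert.mp he with h | h
      · subst h; exact ⟨by tauto, by tauto⟩
      · exact D.arcs_mem e h
    · exact D.arcs_mem e he
  no_loops := by
    intro e he
    split at he
    · rcases Finset.mem_insert.mp he with h | h
      · subst h; tauto
      · exact D.no_loops e h
    · exact D.no_loops e he

/-- `D` is `k`-strongly connected: it has at least `k+1` vertices and removing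
any fewer than `k` vertices leaves a strongly connected digraph. -/
def KStrong (D : Dgraph) (k : ℕ) : Prop :=
  k + 1 ≤ D.verts.card ∧
    ∀ S : Finset ℕ, S.card < k → StronglyConnected (D.delete S)

/-- `(u, v)` is an arc of the complement of `D`. -/
def MissingArc (D : Dgraph) (u v : ℕ) : Prop :=
  u ∈ D.verts ∧ v ∈ D.verts ∧ u ≠ v ∧ (u, v) ∉ D.arcs

/-- `D` is `𝒟ₖ`-saturated: it has no `k`-strongly connected subdigraph, but
adding any missing arc creates one. -/
def DSaturated (D : Dgraph) (k : ℕ) : Prop :=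
  (∀ H : Dgraph, H.IsSubdigraph D → ¬ H.KStrong k) ∧
    ∀ u v : ℕ, D.MissingArc u v →
      ∃ H : Dgraph, H.IsSubdigraph (D.addArc u v) ∧ H.KStrong k

/-- `S` is a separator of `D`. -/
def IsSeparator (D : Dgraph) (S : Finset ℕ) : Prop :=
  S ⊆ D.verts ∧
    (¬ StronglyConnected (D.delete S) ∨ (D.delete S).verts.card ≤ 1)

/-- `S` is a minimum separator of `D`. -/
def IsMinSeparator (D : Dgraph) (S : Finset ℕ) : Prop :=
  D.IsSeparator S ∧ ∀ T : Finset ℕ, D.IsSeparator T → S.card ≤ T.card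

/-- `B` is the vertex set of a strong component of `D`: a maximal set of
vertices inducing a strongly connected subdigraph. -/
def IsStrongComponent (D : Dgraph) (B : Finset ℕ) : Prop :=
  B ⊆ D.verts ∧ B.Nonempty ∧ StronglyConnected (D.induce B) ∧
    ∀ B' : Finset ℕ, B ⊆ B' → B' ⊆ D.verts →
      StronglyConnected (D.induce B') → B' = B

/-- The reciprocal-degree of `v` in `D`. -/
def recipDeg (D : Dgraph) (v : ℕ) : ℕ :=
  (D.verts.filter (fun w => (v, w) ∈ D.arcs ∧ (w, v) ∈ D.arcs)).card

/-- Extend `D` by a new vertex `v`: bidirectional arcs to every vertex of `K`,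
and unidirectional arcs (all out of `v` if `out`, else all into `v`) to every
other vertex of `D`. -/
def extend (D : Dgraph) (v : ℕ) (K : Finset ℕ) (out : Bool) : Dgraph where
  verts := insert v D.verts
  arcs := D.arcs
    ∪ ((K ∩ D.verts).filter (· ≠ v)).image (fun w => (w, v))
    ∪ ((K ∩ D.verts).filter (· ≠ v)).image (fun w => (v, w))
    ∪ (if out then ((D.verts \ K).filter (· ≠ v)).image (fun w => (v, w))
        else ((D.verts \ K).filter (· ≠ v)).image (fun w => (w, v)))
  arcs_mem := by
    intro e he
    rcases Finset.mem_union.mp he with h | h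
    · rcases Finset.mem_union.mp h with h | h
      · rcases Finset.mem_union.mp h with h | h
        · have h2 := D.arcs_mem e h
          exact ⟨Finset.mem_insert_of_mem h2.1, Finset.mem_insert_of_mem h2.2⟩
        · obtain ⟨w, hw, rfl⟩ := Finset.mem_image.mp h
          have hwD := (Finset.mem_inter.mp (Finset.mem_filter.mp hw).1).2
          exact ⟨Finset.mem_insert_of_mem hwD, Finset.mem_insert_self _ _⟩
      · obtain ⟨w, hw, rfl⟩ := Finset.mem_image.mp h
        have hwD := (Finset.mem_inter.mp (Finset.mem_filter.mp hw).1).2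
        exact ⟨Finset.mem_insert_self _ _, Finset.mem_insert_of_mem hwD⟩
    · cases out with
      | true =>
        simp only [if_true] at h
        obtain ⟨w, hw, rfl⟩ := Finset.mem_image.mp h
        have hwD := (Finset.mem_sdiff.mp (Finset.mem_filter.mp hw).1).1
        exact ⟨Finset.mem_insert_self _ _, Finset.mem_insert_of_mem hwD⟩
      | false =>
        simp only [Bool.false_eq_true, if_false] at h
        obtain ⟨w, hw, rfl⟩ := Finset.mem_image.mp h
        have hwD := (Finset.mem_sdiff.mp (Finset.mem_filter.mp hw).1).1
        exact ⟨Finset.mem_insert_of_mem hwD, Finset.mem_insert_self _ _⟩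
  no_loops := by
    intro e he
    rcases Finset.mem_union.mp he with h | h
    · rcases Finset.mem_union.mp h with h | h
      · rcases Finset.mem_union.mp h with h | h
        · exact D.no_loops e h
        · obtain ⟨w, hw, rfl⟩ := Finset.mem_image.mp h
          exact (Finset.mem_filter.mp hw).2
      · obtain ⟨w, hw, rfl⟩ := Finset.mem_image.mp h
        exact fun hvw => (Finset.mem_filter.mp hw).2 hvw.symm
    · cases out with
      | true =>
        simp only [if_true] at h
        obtain ⟨w, hw, rfl⟩ := Finset.mem_image.mp h
        exact fun hvw => (Finset.mem_filter.mp hw).2 hvw.symm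
      | false =>
        simp only [Bool.false_eq_true, if_false] at h
        obtain ⟨w, hw, rfl⟩ := Finset.mem_image.mp h
        exact (Finset.mem_filter.mp hw).2

/-- The recursively defined family of directed `m`-trees. -/
inductive IsDTree (m : ℕ) : Dgraph → Prop
  | base (S : Finset ℕ) (h : S.card = m) : IsDTree m (completeOn S)
  | grow (D : Dgraph) (hD : IsDTree m D) (v : ℕ) (hv : v ∉ D.verts)
      (K : Finset ℕ) (hK : K ⊆ D.verts) (hKcard : K.card = m)
      (hKcomplete : (completeOn K).IsSubdigraph D) (out : Bool) :
      IsDTree m (D.extend v K out)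

/-- `D` is a tournament: exactly one arc between any two distinct vertices. -/
def IsTournament (D : Dgraph) : Prop :=
  ∀ u ∈ D.verts, ∀ v ∈ D.verts, u ≠ v → ((u, v) ∈ D.arcs ↔ (v, u) ∉ D.arcs)

/-- `D` is acyclic: it has no directed cycle. -/
def Acyclic (D : Dgraph) : Prop :=
  ∀ v : ℕ, ¬ Relation.TransGen (fun a b => (a, b) ∈ D.arcs) v v



/-! ### Basic lemmas -/

theorem IsSubdigraph.trans' {A B C : Dgraph} (h1 : A.IsSubdigraph B)
    (h2 : B.IsSubdigraph C) : A.IsSubdigraph C :=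
  ⟨h1.1.trans h2.1, h1.2.trans h2.2⟩

theorem addArc_verts (D : Dgraph) (u v : ℕ) : (D.addArc u v).verts = D.verts := rfl

theorem arcs_subset_addArc (D : Dgraph) (u v : ℕ) : D.arcs ⊆ (D.addArc u v).arcs := by
  show D.arcs ⊆ if _ then _ else _
  split
  · exact Finset.subset_insert _ _
  · exact Finset.Subset.refl _

theorem mem_addArc_self {D : Dgraph} {u v : ℕ} (hu : u ∈ D.verts) (hv : v ∈ D.verts)
    (huv : u ≠ v) : (u, v) ∈ (D.addArc u v).arcs := by
  show (u, v) ∈ if _ then _ else _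
  rw [if_pos ⟨hu, hv, huv⟩]
  exact Finset.mem_insert_self _ _

theorem mem_addArc_elim {D : Dgraph} {u v : ℕ} {e : ℕ × ℕ}
    (he : e ∈ (D.addArc u v).arcs) : e = (u, v) ∨ e ∈ D.arcs := by
  have : e ∈ (if u ∈ D.verts ∧ v ∈ D.verts ∧ u ≠ v then insert (u, v) D.arcs else D.arcs) := he
  split at this
  · exact Finset.mem_insert.mp this
  · exact Or.inr this

theorem addArc_subdigraph_mono {D₁ D₂ : Dgraph} (h : D₁.IsSubdigraph D₂) (u v : ℕ) :
    (D₁.addArc u v).IsSubdigraph (D₂.addArc u v) := by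
  refine ⟨h.1, ?_⟩
  intro e he
  rcases mem_addArc_elim he with rfl | he'
  · have : (u, v) ∈ (D₁.addArc u v).arcs := he
    by_cases hc : u ∈ D₁.verts ∧ v ∈ D₁.verts ∧ u ≠ v
    · exact mem_addArc_self (h.1 hc.1) (h.1 hc.2.1) hc.2.2
    · have : (D₁.addArc u v).arcs = D₁.arcs := if_neg hc
      rw [this] at he
      exact arcs_subset_addArc _ _ _ (h.2 he)
  · exact arcs_subset_addArc _ _ _ (h.2 he')

/-! ### extend lemmas -/

theorem extend_verts (D : Dgraph) (v : ℕ) (K : Finset ℕ) (out : Bool) :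
    (D.extend v K out).verts = insert v D.verts := rfl

theorem arcs_subset_extend (D : Dgraph) (v : ℕ) (K : Finset ℕ) (out : Bool) :
    D.arcs ⊆ (D.extend v K out).arcs := fun e he =>
  Finset.mem_union_left _ (Finset.mem_union_left _ (Finset.mem_union_left _ he))

theorem extend_arc_bidir₁ {D : Dgraph} {v : ℕ} {K : Finset ℕ} {out : Bool}
    (hK : K ⊆ D.verts) (hv : v ∉ D.verts) {w : ℕ} (hw : w ∈ K) :
    (w, v) ∈ (D.extend v K out).arcs := by
  apply Finset.mem_union_left _ (Finset.mem_union_left _ (Finset.mem_union_right _ _))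
  refine Finset.mem_image.mpr ⟨w, ?_, rfl⟩
  refine Finset.mem_filter.mpr ⟨Finset.mem_inter.mpr ⟨hw, hK hw⟩, ?_⟩
  intro h; exact hv (h ▸ hK hw)

theorem extend_arc_bidir₂ {D : Dgraph} {v : ℕ} {K : Finset ℕ} {out : Bool}
    (hK : K ⊆ D.verts) (hv : v ∉ D.verts) {w : ℕ} (hw : w ∈ K) :
    (v, w) ∈ (D.extend v K out).arcs := by
  apply Finset.mem_union_left _ (Finset.mem_union_right _ _)
  refine Finset.mem_image.mpr ⟨w, ?_, rfl⟩
  refine Finset.mem_filter.mpr ⟨Finset.mem_inter.mpr ⟨hw, hK hw⟩, ?_⟩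
  intro h; exact hv (h ▸ hK hw)

theorem extend_arc_uni_true {D : Dgraph} {v : ℕ} {K : Finset ℕ}
    (hv : v ∉ D.verts) {w : ℕ} (hw : w ∈ D.verts) (hwK : w ∉ K) :
    (v, w) ∈ (D.extend v K true).arcs := by
  apply Finset.mem_union_right
  rw [if_pos rfl]
  refine Finset.mem_image.mpr ⟨w, ?_, rfl⟩
  refine Finset.mem_filter.mpr ⟨Finset.mem_sdiff.mpr ⟨hw, hwK⟩, ?_⟩
  intro h; exact hv (h ▸ hw)

theorem extend_arc_uni_false {D : Dgraph} {v : ℕ} {K : Finset ℕ}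
    (hv : v ∉ D.verts) {w : ℕ} (hw : w ∈ D.verts) (hwK : w ∉ K) :
    (w, v) ∈ (D.extend v K false).arcs := by
  apply Finset.mem_union_right
  simp only [Bool.false_eq_true, if_false]
  refine Finset.mem_image.mpr ⟨w, ?_, rfl⟩
  refine Finset.mem_filter.mpr ⟨Finset.mem_sdiff.mpr ⟨hw, hwK⟩, ?_⟩
  intro h; exact hv (h ▸ hw)

theorem extend_arc_old {D : Dgraph} {v : ℕ} {K : Finset ℕ} {out : Bool}
    {e : ℕ × ℕ} (he : e ∈ (D.extend v K out).arcs) (h1 : e.1 ≠ v) (h2 : e.2 ≠ v) :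
    e ∈ D.arcs := by
  rcases Finset.mem_union.mp he with h | h
  · rcases Finset.mem_union.mp h with h | h
    · rcases Finset.mem_union.mp h with h | h
      · exact h
      · obtain ⟨w, _, rfl⟩ := Finset.mem_image.mp h
        exact absurd rfl h2
    · obtain ⟨w, _, rfl⟩ := Finset.mem_image.mp h
      exact absurd rfl h1
  · cases out with
    | true =>
      simp only [if_true] at h
      obtain ⟨w, _, rfl⟩ := Finset.mem_image.mp h
      exact absurd rfl h1
    | false =>
      simp only [Bool.false_eq_true, if_false] at h
      obtain ⟨w, _, rfl⟩ := Finset.mem_image.mp h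
      exact absurd rfl h2

theorem extend_arc_into_v_true {D : Dgraph} {v : ℕ} {K : Finset ℕ}
    (hv : v ∉ D.verts) {z : ℕ} (hz : (z, v) ∈ (D.extend v K true).arcs) :
    z ∈ K := by
  rcases Finset.mem_union.mp hz with h | h
  · rcases Finset.mem_union.mp h with h | h
    · rcases Finset.mem_union.mp h with h | h
      · exact absurd (D.arcs_mem _ h).2 hv
      · obtain ⟨w, hw, hwe⟩ := Finset.mem_image.mp h
        have := (Prod.mk.injEq _ _ _ _).mp hwe
        exact this.1 ▸ (Finset.mem_inter.mp (Finset.mem_filter.mp hw).1).1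
    · obtain ⟨w, hw, hwe⟩ := Finset.mem_image.mp h
      have := (Prod.mk.injEq _ _ _ _).mp hwe
      exact absurd this.2 (Finset.mem_filter.mp hw).2
  · simp only [if_true] at h
    obtain ⟨w, hw, hwe⟩ := Finset.mem_image.mp h
    have := (Prod.mk.injEq _ _ _ _).mp hwe
    exact absurd this.2 (Finset.mem_filter.mp hw).2

theorem extend_arc_outof_v_false {D : Dgraph} {v : ℕ} {K : Finset ℕ}
    (hv : v ∉ D.verts) {z : ℕ} (hz : (v, z) ∈ (D.extend v K false).arcs) :
    z ∈ K := by
  rcases Finset.mem_union.mp hz with h | h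
  · rcases Finset.mem_union.mp h with h | h
    · rcases Finset.mem_union.mp h with h | h
      · exact absurd (D.arcs_mem _ h).1 hv
      · obtain ⟨w, hw, hwe⟩ := Finset.mem_image.mp h
        have := (Prod.mk.injEq _ _ _ _).mp hwe
        exact absurd this.1 (Finset.mem_filter.mp hw).2
    · obtain ⟨w, hw, hwe⟩ := Finset.mem_image.mp h
      have := (Prod.mk.injEq _ _ _ _).mp hwe
      exact this.2 ▸ (Finset.mem_inter.mp (Finset.mem_filter.mp hw).1).1
  · simp only [Bool.false_eq_true, if_false] at h
    obtain ⟨w, hw, hwe⟩ := Finset.mem_image.mp h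
    have := (Prod.mk.injEq _ _ _ _).mp hwe
    exact absurd this.1 (Finset.mem_filter.mp hw).2

/-! ### completeOn lemmas -/

theorem completeOn_arc {S : Finset ℕ} {a b : ℕ} (ha : a ∈ S) (hb : b ∈ S)
    (hab : a ≠ b) : (a, b) ∈ (completeOn S).arcs :=
  Finset.mem_filter.mpr ⟨Finset.mem_product.mpr ⟨ha, hb⟩, hab⟩

theorem completeOn_arc_elim {S : Finset ℕ} {e : ℕ × ℕ}
    (he : e ∈ (completeOn S).arcs) : e.1 ∈ S ∧ e.2 ∈ S ∧ e.1 ≠ e.2 := by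
  have h := Finset.mem_filter.mp he
  have h2 := Finset.mem_product.mp h.1
  exact ⟨h2.1, h2.2, h.2⟩

/-- pull a complete subdigraph of an extension back down, erasing the new vertex -/
theorem completeOn_erase_sub {D : Dgraph} {v : ℕ} {K : Finset ℕ} {out : Bool}
    (hv : v ∉ D.verts) {T : Finset ℕ}
    (hT : (completeOn T).IsSubdigraph (D.extend v K out)) :
    (completeOn (T.erase v)).IsSubdigraph D := by
  constructor
  · intro t ht
    have ht' := Finset.mem_erase.mp ht
    have := hT.1 ht'.2
    rcases Finset.mem_insert.mp this with h | h
    · exact absurd h ht'.1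
    · exact h
  · intro e he
    obtain ⟨h1, h2, h12⟩ := completeOn_arc_elim he
    have h1' := Finset.mem_erase.mp h1
    have h2' := Finset.mem_erase.mp h2
    exact extend_arc_old (hT.2 (completeOn_arc h1'.2 h2'.2 h12)) h1'.1 h2'.1

theorem completeOn_sub_of_not_mem {D : Dgraph} {v : ℕ} {K : Finset ℕ} {out : Bool}
    (hv : v ∉ D.verts) {T : Finset ℕ} (hvT : v ∉ T)
    (hT : (completeOn T).IsSubdigraph (D.extend v K out)) :
    (completeOn T).IsSubdigraph D := by
  have := completeOn_erase_sub hv hT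
  rwa [Finset.erase_eq_of_notMem hvT] at this

/-- members of a clique (in the extension) containing `v`, other than `v`, lie in `K` -/
theorem clique_with_v_sub_K {D : Dgraph} {v : ℕ} {K : Finset ℕ} {out : Bool}
    (hv : v ∉ D.verts) {T : Finset ℕ} (hvT : v ∈ T)
    (hT : (completeOn T).IsSubdigraph (D.extend v K out)) :
    T.erase v ⊆ K := by
  intro t ht
  have ht' := Finset.mem_erase.mp ht
  have harc1 : (t, v) ∈ (D.extend v K out).arcs :=
    hT.2 (completeOn_arc ht'.2 hvT ht'.1)
  have harc2 : (v, t) ∈ (D.extend v K out).arcs :=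
    hT.2 (completeOn_arc hvT ht'.2 (Ne.symm ht'.1))
  cases out with
  | true => exact extend_arc_into_v_true hv harc1
  | false => exact extend_arc_outof_v_false hv harc2

theorem completeOn_singleton_sub {D : Dgraph} {u : ℕ} (hu : u ∈ D.verts) :
    (completeOn {u}).IsSubdigraph D := by
  constructor
  · intro t ht
    rw [Finset.mem_singleton.mp ht]; exact hu
  · intro e he
    obtain ⟨h1, h2, h12⟩ := completeOn_arc_elim he
    rw [Finset.mem_singleton.mp h1, Finset.mem_singleton.mp h2] at h12
    exact absurd rfl h12



/-! ### Bidirectional reachability -/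

def BiRel (D : Dgraph) (W S : Finset ℕ) (a b : ℕ) : Prop :=
  a ∈ W ∧ a ∉ S ∧ b ∈ W ∧ b ∉ S ∧ (a, b) ∈ D.arcs ∧ (b, a) ∈ D.arcs

def BiReach (D : Dgraph) (W S : Finset ℕ) (a b : ℕ) : Prop :=
  Relation.ReflTransGen (BiRel D W S) a b

theorem BiRel.symm' {D : Dgraph} {W S : Finset ℕ} : Symmetric (BiRel D W S) := by
  intro a b h
  exact ⟨h.2.2.1, h.2.2.2.1, h.1, h.2.1, h.2.2.2.2.2, h.2.2.2.2.1⟩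

theorem BiReach.symm' {D : Dgraph} {W S : Finset ℕ} {a b : ℕ}
    (h : BiReach D W S a b) : BiReach D W S b a :=
  (@Relation.ReflTransGen.stdSymm _ _ ⟨fun a b h => BiRel.symm' h⟩).symm _ _ h

theorem BiReach.refl' {D : Dgraph} {W S : Finset ℕ} {a : ℕ} : BiReach D W S a a :=
  Relation.ReflTransGen.refl

theorem BiReach.single' {D : Dgraph} {W S : Finset ℕ} {a b : ℕ}
    (h : BiRel D W S a b) : BiReach D W S a b :=
  Relation.ReflTransGen.single h

theorem BiReach.trans' {D : Dgraph} {W S : Finset ℕ} {a b c : ℕ}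
    (h1 : BiReach D W S a b) (h2 : BiReach D W S b c) : BiReach D W S a c :=
  Relation.ReflTransGen.trans h1 h2

theorem BiReach.mono' {D D' : Dgraph} {W W' S : Finset ℕ}
    (harcs : D.arcs ⊆ D'.arcs) (hW : W ⊆ W') {a b : ℕ}
    (h : BiReach D W S a b) : BiReach D' W' S a b := by
  refine Relation.ReflTransGen.mono ?_ _ _ h
  intro x y hxy
  exact ⟨hW hxy.1, hxy.2.1, hW hxy.2.2.1, hxy.2.2.2.1,
    harcs hxy.2.2.2.2.1, harcs hxy.2.2.2.2.2⟩

/-- choose an element of `A` avoiding `S`. -/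
theorem exists_avoid {A S : Finset ℕ} (h : (S ∩ A).card < A.card) :
    ∃ a ∈ A, a ∉ S := by
  by_contra hc
  push_neg at hc
  have : A ⊆ S ∩ A := fun a ha => Finset.mem_inter.mpr ⟨hc a ha, ha⟩
  exact absurd (Finset.card_le_card this) (by omega)

/-- Lift the all-pairs connectivity property through an extension, given that
the extension clique `K` lies in `W₁`. -/
theorem dagger_lift {D : Dgraph} {v : ℕ} {K : Finset ℕ} {out : Bool} {m : ℕ}
    (hv : v ∉ D.verts) (hK : K ⊆ D.verts) (hKcard : K.card = m)
    {W₁ : Finset ℕ} (hW₁ : W₁ ⊆ D.verts) (hKW : K ⊆ W₁)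
    (hdag : ∀ S : Finset ℕ, (S ∩ W₁).card < m →
      ∀ x ∈ W₁, x ∉ S → ∀ y ∈ W₁, y ∉ S → BiReach D W₁ S x y) :
    ∀ S : Finset ℕ, (S ∩ (W₁ ∪ {v})).card < m →
      ∀ x ∈ W₁ ∪ {v}, x ∉ S → ∀ y ∈ W₁ ∪ {v}, y ∉ S →
        BiReach (D.extend v K out) (W₁ ∪ {v}) S x y := by
  intro S hS x hx hxS y hy hyS
  set E := D.extend v K out with hE
  have hWsub : W₁ ⊆ W₁ ∪ {v} := Finset.subset_union_left
  have harcs : D.arcs ⊆ E.arcs := arcs_subset_extend D v K out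
  have hcard1 : (S ∩ W₁).card < m := by
    refine lt_of_le_of_lt (Finset.card_le_card ?_) hS
    exact Finset.inter_subset_inter (Finset.Subset.refl _) hWsub
  have hvW : v ∈ W₁ ∪ {v} := Finset.mem_union_right _ (Finset.mem_singleton_self v)
  -- from v (if it avoids S) we can step to some j ∈ K \ S
  have hstep : v ∉ S → ∃ j ∈ K, j ∉ S ∧ BiRel E (W₁ ∪ {v}) S v j := by
    intro hvS
    have : (S ∩ K).card < K.card := by
      rw [hKcard]
      refine lt_of_le_of_lt (Finset.card_le_card ?_) hS
      exact Finset.inter_subset_inter (Finset.Subset.refl _) (hKW.trans hWsub)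
    obtain ⟨j, hj, hjS⟩ := exists_avoid this
    exact ⟨j, hj, hjS, hvW, hvS, hWsub (hKW hj), hjS,
      extend_arc_bidir₂ hK hv hj, extend_arc_bidir₁ hK hv hj⟩
  have hmain : ∀ z ∈ W₁, z ∉ S → v ∉ S → BiReach E (W₁ ∪ {v}) S v z := by
    intro z hz hzS hvS
    obtain ⟨j, hj, hjS, hrel⟩ := hstep hvS
    refine (BiReach.single' hrel).trans' ?_
    exact (hdag S hcard1 j (hKW hj) hjS z hz hzS).mono' harcs hWsub
  rcases Finset.mem_union.mp hx with hx1 | hx1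
  · rcases Finset.mem_union.mp hy with hy1 | hy1
    · exact (hdag S hcard1 x hx1 hxS y hy1 hyS).mono' harcs hWsub
    · rw [Finset.mem_singleton.mp hy1]
      rw [Finset.mem_singleton.mp hy1] at hyS
      exact (hmain x hx1 hxS hyS).symm'
  · rw [Finset.mem_singleton.mp hx1]
    rw [Finset.mem_singleton.mp hx1] at hxS
    rcases Finset.mem_union.mp hy with hy1 | hy1
    · exact hmain y hy1 hyS hxS
    · rw [Finset.mem_singleton.mp hy1]
      exact BiReach.refl'

/-- The key structural lemma: inside a directed `m`-tree, for every `m`-clique `K`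
and clique `R` not inside `K`, there is a vertex set `W ⊇ K ∪ R` which is robustly
bidirectionally connected, and in which after deleting up to `m` vertices every
survivor bidirectionally reaches a surviving vertex of `K ∪ R`. -/
theorem exists_W (m : ℕ) : ∀ {D : Dgraph}, IsDTree m D →
    ∀ K R : Finset ℕ, K ⊆ D.verts → K.card = m → (completeOn K).IsSubdigraph D →
    R ⊆ D.verts → (completeOn R).IsSubdigraph D → (∃ r ∈ R, r ∉ K) →
    ∃ W : Finset ℕ, W ⊆ D.verts ∧ K ∪ R ⊆ W ∧
      (∀ S : Finset ℕ, (S ∩ W).card < m →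
        ∀ x ∈ W, x ∉ S → ∀ y ∈ W, y ∉ S → BiReach D W S x y) ∧
      (∀ S : Finset ℕ, (S ∩ W).card ≤ m →
        ∀ x ∈ W, x ∉ S → ∃ y ∈ K ∪ R, y ∉ S ∧ BiReach D W S x y) := by
  intro D hD
  induction hD with
  | base S₀ hS₀ =>
    intro K R hK hKcard _ hR _ hex
    obtain ⟨r, hrR, hrK⟩ := hex
    have hKS : K = S₀ := Finset.eq_of_subset_of_card_le hK (by rw [hKcard, hS₀])
    exact absurd (hKS ▸ hR hrR) hrK
  | grow D hD v hv K hK hKcard hKcomp out ih =>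
    intro K' R hK' hK'card hK'c hR hRc hex
    have harcs : D.arcs ⊆ (D.extend v K out).arcs := arcs_subset_extend D v K out
    by_cases hvKR : v ∈ K' ∪ R
    · by_cases hsub : K' ∪ R ⊆ K ∪ {v}
      · -- case (b): W = K ∪ {v}
        have hWverts : K ∪ {v} ⊆ (D.extend v K out).verts := by
          intro a ha
          rcases Finset.mem_union.mp ha with h | h
          · exact Finset.mem_insert_of_mem (hK h)
          · rw [Finset.mem_singleton.mp h]; exact Finset.mem_insert_self _ _
        have hpair : ∀ a ∈ K ∪ {v}, ∀ b ∈ K ∪ {v}, a ≠ b →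
            (a, b) ∈ (D.extend v K out).arcs ∧ (b, a) ∈ (D.extend v K out).arcs := by
          intro a ha b hb hab
          rcases Finset.mem_union.mp ha with ha1 | ha1 <;>
            rcases Finset.mem_union.mp hb with hb1 | hb1
          · exact ⟨harcs (hKcomp.2 (completeOn_arc ha1 hb1 hab)),
              harcs (hKcomp.2 (completeOn_arc hb1 ha1 (Ne.symm hab)))⟩
          · rw [Finset.mem_singleton.mp hb1]
            exact ⟨extend_arc_bidir₁ hK hv ha1, extend_arc_bidir₂ hK hv ha1⟩
          · rw [Finset.mem_singleton.mp ha1]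
            exact ⟨extend_arc_bidir₂ hK hv hb1, extend_arc_bidir₁ hK hv hb1⟩
          · rw [Finset.mem_singleton.mp ha1, Finset.mem_singleton.mp hb1] at hab
            exact absurd rfl hab
        have hbig : m + 1 ≤ (K' ∪ R).card := by
          obtain ⟨r, hrR, hrK'⟩ := hex
          have : insert r K' ⊆ K' ∪ R := by
            intro a ha
            rcases Finset.mem_insert.mp ha with rfl | ha
            · exact Finset.mem_union_right _ hrR
            · exact Finset.mem_union_left _ ha
          calc m + 1 = (insert r K').card := by rw [Finset.card_insert_of_notMem hrK', hK'card]
            _ ≤ (K' ∪ R).card := Finset.card_le_card this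
        refine ⟨K ∪ {v}, hWverts, hsub, ?_, ?_⟩
        · intro S _ x hx hxS y hy hyS
          by_cases hxy : x = y
          · rw [hxy]; exact BiReach.refl'
          · obtain ⟨h1, h2⟩ := hpair x hx y hy hxy
            exact BiReach.single' ⟨hx, hxS, hy, hyS, h1, h2⟩
        · intro S hS x hx hxS
          have : (S ∩ (K' ∪ R)).card < (K' ∪ R).card := by
            have h1 : S ∩ (K' ∪ R) ⊆ S ∩ (K ∪ {v}) :=
              Finset.inter_subset_inter (Finset.Subset.refl _) hsub
            have := Finset.card_le_card h1
            omega
          obtain ⟨y, hy, hyS⟩ := exists_avoid this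
          refine ⟨y, hy, hyS, ?_⟩
          by_cases hxy : x = y
          · rw [hxy]; exact BiReach.refl'
          · obtain ⟨h1, h2⟩ := hpair x hx y (hsub hy) hxy
            exact BiReach.single' ⟨hx, hxS, hsub hy, hyS, h1, h2⟩
      · obtain ⟨rb, hrb, hrbK⟩ := Finset.not_subset.mp hsub
        have hrbv : rb ≠ v := by
          intro h; subst h
          exact hrbK (Finset.mem_union_right _ (Finset.mem_singleton_self _))
        have hrbK2 : rb ∉ K := fun h => hrbK (Finset.mem_union_left _ h)
        by_cases hvK' : v ∈ K'
        · -- case (d)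
          have hK'er : K'.erase v ⊆ K := clique_with_v_sub_K hv hvK' hK'c
          have hrbR : rb ∈ R := by
            rcases Finset.mem_union.mp hrb with h | h
            · exact absurd (hK'er (Finset.mem_erase.mpr ⟨hrbv, h⟩)) hrbK2
            · exact h
          have hRerD : R.erase v ⊆ D.verts := by
            intro a ha
            have ha' := Finset.mem_erase.mp ha
            rcases Finset.mem_insert.mp (hR ha'.2) with h | h
            · exact absurd h ha'.1
            · exact h
          obtain ⟨W₁, hW₁D, hW₁sup, hdag1, hddag1⟩ := ih K (R.erase v) hK hKcard hKcomp
            hRerD (completeOn_erase_sub hv hRc)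
            ⟨rb, Finset.mem_erase.mpr ⟨hrbv, hrbR⟩, hrbK2⟩
          have hKW₁ : K ⊆ W₁ := (Finset.union_subset_iff.mp hW₁sup).1
          have hvW₁ : v ∉ W₁ := fun h => hv (hW₁D h)
          refine ⟨W₁ ∪ {v}, ?_, ?_, dagger_lift hv hK hKcard hW₁D hKW₁ hdag1, ?_⟩
          · intro a ha
            rcases Finset.mem_union.mp ha with h | h
            · exact Finset.mem_insert_of_mem (hW₁D h)
            · rw [Finset.mem_singleton.mp h]; exact Finset.mem_insert_self _ _
          · intro a ha
            by_cases hav : a = v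
            · exact Finset.mem_union_right _ (Finset.mem_singleton.mpr hav)
            · rcases Finset.mem_union.mp ha with h | h
              · exact Finset.mem_union_left _ (hKW₁ (hK'er (Finset.mem_erase.mpr ⟨hav, h⟩)))
              · exact Finset.mem_union_left _
                  ((Finset.union_subset_iff.mp hW₁sup).2 (Finset.mem_erase.mpr ⟨hav, h⟩))
          · intro S hS x hx hxS
            by_cases hxv : x = v
            · exact ⟨v, Finset.mem_union_left _ hvK', hxv ▸ hxS, hxv ▸ BiReach.refl'⟩
            · have hxW₁ : x ∈ W₁ := by
                rcases Finset.mem_union.mp hx with h | h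
                · exact h
                · exact absurd (Finset.mem_singleton.mp h) hxv
              by_cases hvS : v ∈ S
              · -- v deleted
                have hvSW : v ∈ S ∩ (W₁ ∪ {v}) := Finset.mem_inter.mpr
                  ⟨hvS, Finset.mem_union_right _ (Finset.mem_singleton_self v)⟩
                have hsub2 : S ∩ W₁ ⊆ (S ∩ (W₁ ∪ {v})).erase v := by
                  intro a ha
                  have ha' := Finset.mem_inter.mp ha
                  refine Finset.mem_erase.mpr ⟨fun h => hvW₁ (h ▸ ha'.2), ?_⟩
                  exact Finset.mem_inter.mpr ⟨ha'.1, Finset.mem_union_left _ ha'.2⟩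
                have hcards : (S ∩ W₁).card < m := by
                  have h1 := Finset.card_le_card hsub2
                  have h2 := Finset.card_erase_of_mem hvSW
                  have h3 : 1 ≤ (S ∩ (W₁ ∪ {v})).card := Finset.card_pos.mpr ⟨v, hvSW⟩
                  omega
                have hbig : m + 1 ≤ (K' ∪ R).card := by
                  have hrbK' : rb ∉ K' := fun h =>
                    hrbK2 (hK'er (Finset.mem_erase.mpr ⟨hrbv, h⟩))
                  have : insert rb K' ⊆ K' ∪ R := by
                    intro a ha
                    rcases Finset.mem_insert.mp ha with rfl | ha
                    · exact Finset.mem_union_right _ hrbR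
                    · exact Finset.mem_union_left _ ha
                  calc m + 1 = (insert rb K').card := by
                        rw [Finset.card_insert_of_notMem hrbK', hK'card]
                    _ ≤ (K' ∪ R).card := Finset.card_le_card this
                have hKRW : K' ∪ R ⊆ W₁ ∪ {v} := by
                  intro a ha
                  by_cases hav : a = v
                  · exact Finset.mem_union_right _ (Finset.mem_singleton.mpr hav)
                  · rcases Finset.mem_union.mp ha with h | h
                    · exact Finset.mem_union_left _ (hKW₁ (hK'er (Finset.mem_erase.mpr ⟨hav, h⟩)))
                    · exact Finset.mem_union_left _
                        ((Finset.union_subset_iff.mp hW₁sup).2 (Finset.mem_erase.mpr ⟨hav, h⟩))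
                have : (S ∩ (K' ∪ R)).card < (K' ∪ R).card := by
                  have h1 : S ∩ (K' ∪ R) ⊆ S ∩ (W₁ ∪ {v}) :=
                    Finset.inter_subset_inter (Finset.Subset.refl _) hKRW
                  have := Finset.card_le_card h1
                  omega
                obtain ⟨z, hz, hzS⟩ := exists_avoid this
                have hzv : z ≠ v := fun h => hzS (h ▸ hvS)
                have hzW₁ : z ∈ W₁ := by
                  rcases Finset.mem_union.mp (hKRW hz) with h | h
                  · exact h
                  · exact absurd (Finset.mem_singleton.mp h) hzv
                exact ⟨z, hz, hzS,
                  (hdag1 S hcards x hxW₁ hxS z hzW₁ hzS).mono' harcs Finset.subset_union_left⟩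
              · -- v alive
                have hSW₁ : (S ∩ W₁).card ≤ m := by
                  have h1 : S ∩ W₁ ⊆ S ∩ (W₁ ∪ {v}) :=
                    Finset.inter_subset_inter (Finset.Subset.refl _) Finset.subset_union_left
                  have := Finset.card_le_card h1
                  omega
                obtain ⟨y, hy, hyS, hbr⟩ := hddag1 S hSW₁ x hxW₁ hxS
                have hbr' := hbr.mono' harcs (Finset.subset_union_left (s₂ := {v}))
                rcases Finset.mem_union.mp hy with hyK | hyR
                · -- step from y ∈ K to v
                  have hyW : y ∈ W₁ ∪ {v} := Finset.mem_union_left _ (hKW₁ hyK)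
                  have hvW : v ∈ W₁ ∪ {v} :=
                    Finset.mem_union_right _ (Finset.mem_singleton_self v)
                  refine ⟨v, Finset.mem_union_left _ hvK', hvS, hbr'.trans' (BiReach.single'
                    ⟨hyW, hyS, hvW, hvS, extend_arc_bidir₁ hK hv hyK,
                      extend_arc_bidir₂ hK hv hyK⟩)⟩
                · exact ⟨y, Finset.mem_union_right _ (Finset.erase_subset _ _ hyR), hyS, hbr'⟩
        · -- case (c): v ∈ R \ K'
          have hvR : v ∈ R := by
            rcases Finset.mem_union.mp hvKR with h | h
            · exact absurd h hvK'
            · exact h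
          have hRer : R.erase v ⊆ K := clique_with_v_sub_K hv hvR hRc
          have hK'D : K' ⊆ D.verts := by
            intro a ha
            rcases Finset.mem_insert.mp (hK' ha) with h | h
            · exact absurd (h ▸ ha) hvK'
            · exact h
          have hK'cD : (completeOn K').IsSubdigraph D :=
            completeOn_sub_of_not_mem hv hvK' hK'c
          have hKK' : ∃ r ∈ K, r ∉ K' := by
            by_contra hc
            push_neg at hc
            have hKeq : K = K' := Finset.eq_of_subset_of_card_le hc (by rw [hKcard, hK'card])
            refine hsub ?_
            intro a ha
            rcases Finset.mem_union.mp ha with h | h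
            · exact Finset.mem_union_left _ (hKeq ▸ h)
            · by_cases hav : a = v
              · exact Finset.mem_union_right _ (Finset.mem_singleton.mpr hav)
              · exact Finset.mem_union_left _ (hRer (Finset.mem_erase.mpr ⟨hav, h⟩))
          obtain ⟨W₁, hW₁D, hW₁sup, hdag1, hddag1⟩ := ih K' K hK'D hK'card hK'cD
            hK hKcomp hKK'
          have hKW₁ : K ⊆ W₁ := (Finset.union_subset_iff.mp hW₁sup).2
          have hK'W₁ : K' ⊆ W₁ := (Finset.union_subset_iff.mp hW₁sup).1
          have hvW₁ : v ∉ W₁ := fun h => hv (hW₁D h)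
          have hKRW : K' ∪ R ⊆ W₁ ∪ {v} := by
            intro a ha
            by_cases hav : a = v
            · exact Finset.mem_union_right _ (Finset.mem_singleton.mpr hav)
            · rcases Finset.mem_union.mp ha with h | h
              · exact Finset.mem_union_left _ (hK'W₁ h)
              · exact Finset.mem_union_left _ (hKW₁ (hRer (Finset.mem_erase.mpr ⟨hav, h⟩)))
          refine ⟨W₁ ∪ {v}, ?_, hKRW, dagger_lift hv hK hKcard hW₁D hKW₁ hdag1, ?_⟩
          · intro a ha
            rcases Finset.mem_union.mp ha with h | h
            · exact Finset.mem_insert_of_mem (hW₁D h)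
            · rw [Finset.mem_singleton.mp h]; exact Finset.mem_insert_self _ _
          · intro S hS x hx hxS
            by_cases hxv : x = v
            · exact ⟨v, Finset.mem_union_right _ hvR, hxv ▸ hxS, hxv ▸ BiReach.refl'⟩
            · have hxW₁ : x ∈ W₁ := by
                rcases Finset.mem_union.mp hx with h | h
                · exact h
                · exact absurd (Finset.mem_singleton.mp h) hxv
              by_cases hvS : v ∈ S
              · have hvSW : v ∈ S ∩ (W₁ ∪ {v}) := Finset.mem_inter.mpr
                  ⟨hvS, Finset.mem_union_right _ (Finset.mem_singleton_self v)⟩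
                have hsub2 : S ∩ W₁ ⊆ (S ∩ (W₁ ∪ {v})).erase v := by
                  intro a ha
                  have ha' := Finset.mem_inter.mp ha
                  refine Finset.mem_erase.mpr ⟨fun h => hvW₁ (h ▸ ha'.2), ?_⟩
                  exact Finset.mem_inter.mpr ⟨ha'.1, Finset.mem_union_left _ ha'.2⟩
                have hcards : (S ∩ W₁).card < m := by
                  have h1 := Finset.card_le_card hsub2
                  have h2 := Finset.card_erase_of_mem hvSW
                  have h3 : 1 ≤ (S ∩ (W₁ ∪ {v})).card := Finset.card_pos.mpr ⟨v, hvSW⟩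
                  omega
                have hbig : m + 1 ≤ (K' ∪ R).card := by
                  have : insert v K' ⊆ K' ∪ R := by
                    intro a ha
                    rcases Finset.mem_insert.mp ha with rfl | ha
                    · exact Finset.mem_union_right _ hvR
                    · exact Finset.mem_union_left _ ha
                  calc m + 1 = (insert v K').card := by
                        rw [Finset.card_insert_of_notMem hvK', hK'card]
                    _ ≤ (K' ∪ R).card := Finset.card_le_card this
                have : (S ∩ (K' ∪ R)).card < (K' ∪ R).card := by
                  have h1 : S ∩ (K' ∪ R) ⊆ S ∩ (W₁ ∪ {v}) :=
                    Finset.inter_subset_inter (Finset.Subset.refl _) hKRW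
                  have := Finset.card_le_card h1
                  omega
                obtain ⟨z, hz, hzS⟩ := exists_avoid this
                have hzv : z ≠ v := fun h => hzS (h ▸ hvS)
                have hzW₁ : z ∈ W₁ := by
                  rcases Finset.mem_union.mp (hKRW hz) with h | h
                  · exact h
                  · exact absurd (Finset.mem_singleton.mp h) hzv
                exact ⟨z, hz, hzS,
                  (hdag1 S hcards x hxW₁ hxS z hzW₁ hzS).mono' harcs Finset.subset_union_left⟩
              · have hSW₁ : (S ∩ W₁).card ≤ m := by
                  have h1 : S ∩ W₁ ⊆ S ∩ (W₁ ∪ {v}) :=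
                    Finset.inter_subset_inter (Finset.Subset.refl _) Finset.subset_union_left
                  have := Finset.card_le_card h1
                  omega
                obtain ⟨y, hy, hyS, hbr⟩ := hddag1 S hSW₁ x hxW₁ hxS
                have hbr' := hbr.mono' harcs (Finset.subset_union_left (s₂ := {v}))
                rcases Finset.mem_union.mp hy with hyK' | hyK
                · exact ⟨y, Finset.mem_union_left _ hyK', hyS, hbr'⟩
                · have hyW : y ∈ W₁ ∪ {v} := Finset.mem_union_left _ (hKW₁ hyK)
                  have hvW : v ∈ W₁ ∪ {v} :=
                    Finset.mem_union_right _ (Finset.mem_singleton_self v)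
                  refine ⟨v, Finset.mem_union_right _ hvR, hvS, hbr'.trans' (BiReach.single'
                    ⟨hyW, hyS, hvW, hvS, extend_arc_bidir₁ hK hv hyK,
                      extend_arc_bidir₂ hK hv hyK⟩)⟩
    · -- case (a): v ∉ K' ∪ R
      have hvK' : v ∉ K' := fun h => hvKR (Finset.mem_union_left _ h)
      have hvR : v ∉ R := fun h => hvKR (Finset.mem_union_right _ h)
      have hK'D : K' ⊆ D.verts := by
        intro a ha
        rcases Finset.mem_insert.mp (hK' ha) with h | h
        · exact absurd (h ▸ ha) hvK'
        · exact h
      have hRD : R ⊆ D.verts := by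
        intro a ha
        rcases Finset.mem_insert.mp (hR ha) with h | h
        · exact absurd (h ▸ ha) hvR
        · exact h
      obtain ⟨W, hWD, hWsup, hdag, hddag⟩ := ih K' R hK'D hK'card
        (completeOn_sub_of_not_mem hv hvK' hK'c) hRD
        (completeOn_sub_of_not_mem hv hvR hRc) hex
      refine ⟨W, fun a ha => Finset.mem_insert_of_mem (hWD ha), hWsup, ?_, ?_⟩
      · intro S hS x hx hxS y hy hyS
        exact (hdag S hS x hx hxS y hy hyS).mono' harcs (Finset.Subset.refl _)
      · intro S hS x hx hxS
        obtain ⟨y, hy, hyS, hbr⟩ := hddag S hS x hx hxS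
        exact ⟨y, hy, hyS, hbr.mono' harcs (Finset.Subset.refl _)⟩

theorem key_strong (m : ℕ) {D : Dgraph} (hD : IsDTree m D)
    (K : Finset ℕ) (hK : K ⊆ D.verts) (hKcard : K.card = m)
    (hKc : (completeOn K).IsSubdigraph D) (v : ℕ) (hv : v ∉ D.verts)
    (u : ℕ) (hu : u ∈ D.verts) (huK : u ∉ K) (out : Bool) :
    ∃ H : Dgraph,
      H.IsSubdigraph ((D.extend v K out).addArc (if out then u else v) (if out then v else u)) ∧
      H.KStrong (m + 1) := by
  obtain ⟨W, hWD, hWsup, hdag, hddag⟩ := exists_W m hD K {u} hK hKcard hKc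
    (Finset.singleton_subset_iff.mpr hu) (completeOn_singleton_sub hu)
    ⟨u, Finset.mem_singleton_self u, huK⟩
  have hKW : K ⊆ W := (Finset.union_subset_iff.mp hWsup).1
  have huW : u ∈ W := hWsup (Finset.mem_union_right _ (Finset.mem_singleton_self u))
  have hvW : v ∉ W := fun h => hv (hWD h)
  have huv : u ≠ v := fun h => hv (h ▸ hu)
  set a := if out then u else v with ha
  set b := if out then v else u with hb
  set E := (D.extend v K out).addArc a b with hE
  have hEverts : E.verts = insert v D.verts := rfl
  have hWE : W ∪ {v} ⊆ E.verts := by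
    rw [hEverts]
    intro x hx
    rcases Finset.mem_union.mp hx with h | h
    · exact Finset.mem_insert_of_mem (hWD h)
    · rw [Finset.mem_singleton.mp h]; exact Finset.mem_insert_self _ _
  have harcsD : D.arcs ⊆ E.arcs := fun e he =>
    arcs_subset_addArc _ _ _ (arcs_subset_extend D v K out he)
  have harcsE : (D.extend v K out).arcs ⊆ E.arcs := arcs_subset_addArc _ _ _
  have hnew : (a, b) ∈ E.arcs := by
    have hvmem : v ∈ (D.extend v K out).verts := Finset.mem_insert_self _ _
    have humem : u ∈ (D.extend v K out).verts := Finset.mem_insert_of_mem hu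
    cases out with
    | true => simpa [hE, ha, hb] using mem_addArc_self humem hvmem huv
    | false => simpa [hE, ha, hb] using mem_addArc_self hvmem humem (Ne.symm huv)
  refine ⟨E.induce (W ∪ {v}), ⟨Finset.inter_subset_left, Finset.filter_subset _ _⟩, ?_, ?_⟩
  · -- cardinality
    have h1 : (E.induce (W ∪ {v})).verts = W ∪ {v} := Finset.inter_eq_right.mpr hWE
    have hins : W ∪ {v} = insert v W := by ext x; simp [Finset.mem_union, Finset.mem_insert, or_comm]
    rw [h1, hins, Finset.card_insert_of_notMem hvW]
    have : insert u K ⊆ W := by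
      intro x hx
      rcases Finset.mem_insert.mp hx with rfl | hx
      · exact huW
      · exact hKW hx
    have := Finset.card_le_card this
    rw [Finset.card_insert_of_notMem huK, hKcard] at this
    omega
  · -- strong connectivity after deletions
    intro S hScard
    have hScard' : S.card ≤ m := by omega
    set H := E.induce (W ∪ {v}) with hH
    have hHverts : H.verts = W ∪ {v} := Finset.inter_eq_right.mpr hWE
    have hHarc : ∀ p q : ℕ, (p, q) ∈ E.arcs → p ∈ W ∪ {v} → q ∈ W ∪ {v} →
        p ∉ S → q ∉ S → (p, q) ∈ (H.delete S).arcs := by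
      intro p q h1 h2 h3 h4 h5
      exact Finset.mem_filter.mpr ⟨Finset.mem_filter.mpr ⟨h1, h2, h3⟩, h4, h5⟩
    have hBR : ∀ p q : ℕ, BiReach D W S p q → Reach (H.delete S) p q := by
      intro p q h
      refine Relation.ReflTransGen.mono ?_ _ _ h
      rintro x y ⟨hx, hxS, hy, hyS, hxy, -⟩
      exact hHarc x y (harcsD hxy) (Finset.mem_union_left _ hx)
        (Finset.mem_union_left _ hy) hxS hyS
    intro p hp q hq
    have hp' : p ∈ W ∪ {v} ∧ p ∉ S := by
      have := Finset.mem_sdiff.mp hp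
      exact ⟨hHverts ▸ this.1, this.2⟩
    have hq' : q ∈ W ∪ {v} ∧ q ∉ S := by
      have := Finset.mem_sdiff.mp hq
      exact ⟨hHverts ▸ this.1, this.2⟩
    by_cases hvS : v ∈ S
    · -- v is deleted : use robust connectivity within W
      have hpW : p ∈ W := by
        rcases Finset.mem_union.mp hp'.1 with h | h
        · exact h
        · exact absurd hvS (Finset.mem_singleton.mp h ▸ hp'.2)
      have hqW : q ∈ W := by
        rcases Finset.mem_union.mp hq'.1 with h | h
        · exact h
        · exact absurd hvS (Finset.mem_singleton.mp h ▸ hq'.2)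
      have hcards : (S ∩ W).card < m := by
        have hsub2 : S ∩ W ⊆ S.erase v := by
          intro x hx
          have hx' := Finset.mem_inter.mp hx
          exact Finset.mem_erase.mpr ⟨fun h => hvW (h ▸ hx'.2), hx'.1⟩
        have h1 := Finset.card_le_card hsub2
        have h2 := Finset.card_erase_of_mem hvS
        have h3 : 1 ≤ S.card := Finset.card_pos.mpr ⟨v, hvS⟩
        omega
      exact hBR p q (hdag S hcards p hpW hp'.2 q hqW hq'.2)
    · -- v survives
      have hSW : (S ∩ W).card ≤ m := by
        have h0 : (S ∩ W).card ≤ S.card := Finset.card_le_card Finset.inter_subset_left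
        omega
      have hvWv : v ∈ W ∪ {v} := Finset.mem_union_right _ (Finset.mem_singleton_self v)
      have harc_yv : ∀ y, y ∈ K ∪ {u} → (y, v) ∈ E.arcs ∨ out = false := by
        intro y hy
        cases out with
        | true =>
          rcases Finset.mem_union.mp hy with h | h
          · exact Or.inl (harcsE (extend_arc_bidir₁ hK hv h))
          · left
            rw [Finset.mem_singleton.mp h]
            simpa [ha, hb] using hnew
        | false => exact Or.inr rfl
      -- reach from any member of W to v, and from v to any member of W
      have hRxv : ∀ x ∈ W, x ∉ S → Reach (H.delete S) x v := by
        intro x hx hxS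
        cases out with
        | true =>
          obtain ⟨y, hy, hyS, hbr⟩ := hddag S hSW x hx hxS
          have hyW : y ∈ W := hWsup hy
          have harc : (y, v) ∈ E.arcs := by
            rcases Finset.mem_union.mp hy with h | h
            · exact harcsE (extend_arc_bidir₁ hK hv h)
            · rw [Finset.mem_singleton.mp h]
              simpa [ha, hb] using hnew
          exact (hBR x y hbr).trans (Relation.ReflTransGen.single
            (hHarc y v harc (Finset.mem_union_left _ hyW) hvWv hyS hvS))
        | false =>
          have harc : (x, v) ∈ E.arcs := by
            by_cases hxK : x ∈ K
            · exact harcsE (extend_arc_bidir₁ hK hv hxK)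
            · exact harcsE (extend_arc_uni_false hv (hWD hx) hxK)
          exact Relation.ReflTransGen.single
            (hHarc x v harc (Finset.mem_union_left _ hx) hvWv hxS hvS)
      have hRvx : ∀ x ∈ W, x ∉ S → Reach (H.delete S) v x := by
        intro x hx hxS
        cases out with
        | true =>
          have harc : (v, x) ∈ E.arcs := by
            by_cases hxK : x ∈ K
            · exact harcsE (extend_arc_bidir₂ hK hv hxK)
            · exact harcsE (extend_arc_uni_true hv (hWD hx) hxK)
          exact Relation.ReflTransGen.single
            (hHarc v x harc hvWv (Finset.mem_union_left _ hx) hvS hxS)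
        | false =>
          obtain ⟨y, hy, hyS, hbr⟩ := hddag S hSW x hx hxS
          have hyW : y ∈ W := hWsup hy
          have harc : (v, y) ∈ E.arcs := by
            rcases Finset.mem_union.mp hy with h | h
            · exact harcsE (extend_arc_bidir₂ hK hv h)
            · rw [Finset.mem_singleton.mp h]
              simpa [ha, hb] using hnew
          exact (Relation.ReflTransGen.single
            (hHarc v y harc hvWv (Finset.mem_union_left _ hyW) hvS hyS)).trans
            (hBR y x hbr.symm')
      rcases Finset.mem_union.mp hp'.1 with hpW | hpv
      · rcases Finset.mem_union.mp hq'.1 with hqW | hqv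
        · exact (hRxv p hpW hp'.2).trans (hRvx q hqW hq'.2)
        · rw [Finset.mem_singleton.mp hqv]
          exact hRxv p hpW hp'.2
      · rw [Finset.mem_singleton.mp hpv]
        rcases Finset.mem_union.mp hq'.1 with hqW | hqv
        · exact hRvx q hqW hq'.2
        · rw [Finset.mem_singleton.mp hqv]
          exact Relation.ReflTransGen.refl

/-- Part (a): a directed `m`-tree has no `(m+1)`-strongly connected subdigraph. -/
theorem sat_a (m : ℕ) : ∀ {D : Dgraph}, IsDTree m D →
    ∀ H : Dgraph, H.IsSubdigraph D → ¬ H.KStrong (m + 1) := by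
  intro D hD
  induction hD with
  | base S₀ hS₀ =>
    intro H hsub hKS
    have h1 : H.verts.card ≤ S₀.card := Finset.card_le_card hsub.1
    have h2 := hKS.1
    omega
  | grow D hD v hv K hK hKcard hKcomp out ih =>
    intro H hsub hKS
    by_cases hvH : v ∈ H.verts
    · -- delete K : v gets separated from the rest
      have hSC := hKS.2 K (by rw [hKcard]; omega)
      have hvK : v ∉ K := fun h => hv (hK h)
      have hvDel : v ∈ (H.delete K).verts := Finset.mem_sdiff.mpr ⟨hvH, hvK⟩
      -- find another vertex w ≠ v outside K
      have hcard2 : 1 < (H.verts \ K).card := by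
        have h1 := hKS.1
        have h2 : (H.verts \ K).card ≥ H.verts.card - K.card := Finset.le_card_sdiff _ _
        rw [hKcard] at h2
        omega
      obtain ⟨w, hw, hwv⟩ := Finset.exists_mem_ne hcard2 v
      have hwDel : w ∈ (H.delete K).verts := by
        have := Finset.mem_sdiff.mp hw
        exact Finset.mem_sdiff.mpr this
      have hwK : w ∉ K := (Finset.mem_sdiff.mp hw).2
      cases out with
      | true =>
        -- no arc enters v from outside K
        have hreach := hSC w hwDel v hvDel
        rcases Relation.ReflTransGen.cases_tail hreach with h | ⟨c, _, hc⟩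
        · exact hwv h.symm
        · have hc' := Finset.mem_filter.mp hc
          have hcarc : (c, v) ∈ (D.extend v K true).arcs := hsub.2 hc'.1
          exact hc'.2.1 (extend_arc_into_v_true hv hcarc)
      | false =>
        have hreach := hSC v hvDel w hwDel
        rcases Relation.ReflTransGen.cases_head hreach with h | ⟨c, hc, _⟩
        · exact hwv h.symm
        · have hc' := Finset.mem_filter.mp hc
          have hcarc : (v, c) ∈ (D.extend v K false).arcs := hsub.2 hc'.1
          exact hc'.2.2 (extend_arc_outof_v_false hv hcarc)
    · -- H avoids v entirely, so it is a subdigraph of D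
      refine ih H ⟨?_, ?_⟩ hKS
      · intro x hx
        rcases Finset.mem_insert.mp (hsub.1 hx) with h | h
        · exact absurd (h ▸ hx) hvH
        · exact h
      · intro e he
        have hmem := H.arcs_mem e he
        have h1 : e.1 ≠ v := fun h => hvH (h ▸ hmem.1)
        have h2 : e.2 ≠ v := fun h => hvH (h ▸ hmem.2)
        exact extend_arc_old (hsub.2 he) h1 h2

/-- Part (b): adding any missing arc to a directed `m`-tree creates an
`(m+1)`-strongly connected subdigraph. -/
theorem sat_b (m : ℕ) : ∀ {D : Dgraph}, IsDTree m D →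
    ∀ x y : ℕ, D.MissingArc x y →
      ∃ H : Dgraph, H.IsSubdigraph (D.addArc x y) ∧ H.KStrong (m + 1) := by
  intro D hD
  induction hD with
  | base S₀ hS₀ =>
    intro x y hmiss
    obtain ⟨hx, hy, hxy, harc⟩ := hmiss
    exact absurd (completeOn_arc hx hy hxy) harc
  | grow D hD v hv K hK hKcard hKcomp out ih =>
    intro x y hmiss
    obtain ⟨hx, hy, hxy, harc⟩ := hmiss
    by_cases hxv : x = v
    · -- the missing arc goes out of v, so out = false
      subst hxv
      have hyD : y ∈ D.verts := by
        rcases Finset.mem_insert.mp hy with h | h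
        · exact absurd h.symm hxy
        · exact h
      cases out with
      | true =>
        exfalso
        by_cases hyK : y ∈ K
        · exact harc (extend_arc_bidir₂ hK hv hyK)
        · exact harc (extend_arc_uni_true hv hyD hyK)
      | false =>
        have hyK : y ∉ K := fun h => harc (extend_arc_bidir₂ hK hv h)
        have := key_strong m hD K hK hKcard hKcomp x hv y hyD hyK false
        simpa using this
    · by_cases hyv : y = v
      · -- the missing arc enters v, so out = true
        subst hyv
        have hxD : x ∈ D.verts := by
          rcases Finset.mem_insert.mp hx with h | h
          · exact absurd h hxv
          · exact h
        cases out with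
        | false =>
          exfalso
          by_cases hxK : x ∈ K
          · exact harc (extend_arc_bidir₁ hK hv hxK)
          · exact harc (extend_arc_uni_false hv hxD hxK)
        | true =>
          have hxK : x ∉ K := fun h => harc (extend_arc_bidir₁ hK hv h)
          have := key_strong m hD K hK hKcard hKcomp y hv x hxD hxK true
          simpa using this
      · -- both endpoints are old vertices
        have hxD : x ∈ D.verts := by
          rcases Finset.mem_insert.mp hx with h | h
          · exact absurd h hxv
          · exact h
        have hyD : y ∈ D.verts := by
          rcases Finset.mem_insert.mp hy with h | h
          · exact absurd h hyv
          · exact h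
        have harcD : (x, y) ∉ D.arcs := fun h => harc (arcs_subset_extend D v K out h)
        obtain ⟨H, hHsub, hHKS⟩ := ih x y ⟨hxD, hyD, hxy, harcD⟩
        refine ⟨H, hHsub.trans' (addArc_subdigraph_mono ?_ x y), hHKS⟩
        exact ⟨Finset.subset_insert _ _, arcs_subset_extend D v K out⟩

/-- Arc count for directed `m`-trees. -/
theorem tree_count (m : ℕ) (hm : 1 ≤ m) : ∀ {D : Dgraph}, IsDTree m D →
    m ≤ D.verts.card ∧
    D.arcs.card = (D.verts.card - m).choose 2 + m * (2 * D.verts.card - (m + 1)) := by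
  intro D hD
  induction hD with
  | base S₀ hS₀ =>
    constructor
    · exact le_of_eq hS₀.symm
    · show (completeOn S₀).arcs.card = (S₀.card - m).choose 2 + m * (2 * S₀.card - (m + 1))
      have h1 : (completeOn S₀).arcs = S₀.offDiag := by
        ext e; simp [completeOn, Finset.mem_offDiag, and_assoc]
      rw [h1, Finset.offDiag_card, hS₀]
      have e2 : m - m = 0 := by omega
      have e3 : 2 * m - (m + 1) = m - 1 := by omega
      rw [e2, e3]
      obtain ⟨m', rfl⟩ : ∃ m', m = m' + 1 := ⟨m - 1, by omega⟩
      rw [Nat.add_sub_cancel, Nat.mul_succ, Nat.add_sub_cancel]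
      simp
  | grow D hD v hv K hK hKcard hKcomp out ih =>
    obtain ⟨ihc, iha⟩ := ih
    have hnK : m ≤ D.verts.card := by
      have := Finset.card_le_card hK
      omega
    have hvc : (D.extend v K out).verts.card = D.verts.card + 1 := by
      show (insert v D.verts).card = _
      rw [Finset.card_insert_of_notMem hv]
    constructor
    · rw [hvc]; omega
    · -- rewrite the filtered sets
      have hKF : (K ∩ D.verts).filter (· ≠ v) = K := by
        ext w
        simp only [Finset.mem_filter, Finset.mem_inter]
        constructor
        · exact fun h => h.1.1
        · intro hw
          exact ⟨⟨hw, hK hw⟩, fun h => hv (h ▸ hK hw)⟩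
      have hUF : (D.verts \ K).filter (· ≠ v) = D.verts \ K := by
        ext w
        simp only [Finset.mem_filter, Finset.mem_sdiff]
        constructor
        · exact fun h => h.1
        · intro hw
          exact ⟨hw, fun h => hv (h ▸ hw.1)⟩
      have hinj1 : Function.Injective (fun w : ℕ => (w, v)) := by
        intro a b h; exact congrArg Prod.fst h
      have hinj2 : Function.Injective (fun w : ℕ => (v, w)) := by
        intro a b h; exact congrArg Prod.snd h
      have harcs : (D.extend v K out).arcs =
          ((D.arcs ∪ K.image (fun w => (w, v))) ∪ K.image (fun w => (v, w))) ∪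
            (if out then (D.verts \ K).image (fun w => (v, w))
              else (D.verts \ K).image (fun w => (w, v))) := by
        show ((D.arcs ∪ _ ∪ _) ∪ _) = _
        rw [hKF, hUF]
      have hd1 : Disjoint D.arcs (K.image (fun w => (w, v))) := by
        rw [Finset.disjoint_left]
        intro e he he'
        obtain ⟨w, _, rfl⟩ := Finset.mem_image.mp he'
        exact hv (D.arcs_mem _ he).2
      have hd2 : Disjoint (D.arcs ∪ K.image (fun w => (w, v)))
          (K.image (fun w => (v, w))) := by
        rw [Finset.disjoint_left]
        intro e he he'
        obtain ⟨w, hw, rfl⟩ := Finset.mem_image.mp he'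
        rcases Finset.mem_union.mp he with h | h
        · exact hv (D.arcs_mem _ h).1
        · obtain ⟨w', hw', hww⟩ := Finset.mem_image.mp h
          have := (Prod.mk.injEq _ _ _ _).mp hww
          exact hv (this.1 ▸ hK hw')
      have hd3 : Disjoint ((D.arcs ∪ K.image (fun w => (w, v))) ∪ K.image (fun w => (v, w)))
          (if out then (D.verts \ K).image (fun w => (v, w))
            else (D.verts \ K).image (fun w => (w, v))) := by
        rw [Finset.disjoint_left]
        intro e he he'
        cases out with
        | true =>
          simp only [if_true] at he'
          obtain ⟨w, hw, rfl⟩ := Finset.mem_image.mp he'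
          have hw' := Finset.mem_sdiff.mp hw
          rcases Finset.mem_union.mp he with h | h
          · rcases Finset.mem_union.mp h with h2 | h2
            · exact hv (D.arcs_mem _ h2).1
            · obtain ⟨w', hw'', hww⟩ := Finset.mem_image.mp h2
              have := (Prod.mk.injEq _ _ _ _).mp hww
              exact hv (this.1 ▸ hK hw'')
          · obtain ⟨w', hw'', hww⟩ := Finset.mem_image.mp h
            have := (Prod.mk.injEq _ _ _ _).mp hww
            exact hw'.2 (this.2 ▸ hw'')
        | false =>
          simp only [Bool.false_eq_true, if_false] at he'
          obtain ⟨w, hw, rfl⟩ := Finset.mem_image.mp he'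
          have hw' := Finset.mem_sdiff.mp hw
          rcases Finset.mem_union.mp he with h | h
          · rcases Finset.mem_union.mp h with h2 | h2
            · exact hv (D.arcs_mem _ h2).2
            · obtain ⟨w', hw'', hww⟩ := Finset.mem_image.mp h2
              have := (Prod.mk.injEq _ _ _ _).mp hww
              exact hw'.2 (this.1 ▸ hw'')
          · obtain ⟨w', hw'', hww⟩ := Finset.mem_image.mp h
            have := (Prod.mk.injEq _ _ _ _).mp hww
            exact hv (by rw [this.1]; exact hw'.1)
      have hcardU : (if out then (D.verts \ K).image (fun w => (v, w))
          else (D.verts \ K).image (fun w => (w, v))).card = D.verts.card - m := by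
        cases out with
        | true =>
          simp only [if_true]
          rw [Finset.card_image_of_injective _ hinj2, Finset.card_sdiff_of_subset hK, hKcard]
        | false =>
          simp only [Bool.false_eq_true, if_false]
          rw [Finset.card_image_of_injective _ hinj1, Finset.card_sdiff_of_subset hK, hKcard]
      have htotal : (D.extend v K out).arcs.card =
          D.arcs.card + m + m + (D.verts.card - m) := by
        rw [harcs, Finset.card_union_of_disjoint hd3, Finset.card_union_of_disjoint hd2,
          Finset.card_union_of_disjoint hd1, Finset.card_image_of_injective _ hinj1,
          Finset.card_image_of_injective _ hinj2, hKcard, hcardU]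
      rw [htotal, hvc, iha]
      -- numeric identity
      obtain ⟨a, ha⟩ : ∃ a, D.verts.card = m + a := ⟨D.verts.card - m, by omega⟩
      rw [ha]
      have e1 : m + a - m = a := by omega
      have e2 : m + a + 1 - m = a + 1 := by omega
      have e3 : 2 * (m + a + 1) - (m + 1) = (2 * (m + a) - (m + 1)) + 2 := by omega
      rw [e1, e2, e3]
      have e4 : (a + 1).choose 2 = a.choose 1 + a.choose 2 := Nat.choose_succ_succ a 1
      rw [e4, Nat.choose_one_right, Nat.mul_add m (2 * (m + a) - (m + 1)) 2]
      set c := a.choose 2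
      set d := m * (2 * (m + a) - (m + 1))
      omega
end Dgraph

open Dgraph
/-- Every directed `(k-1)`-tree on `n ≥ k` vertices is `𝒟ₖ`-saturated and has
exactly `C(n-k+1, 2) + (k-1)(2n-k)` arcs. -/
theorem stmt10 (k n : ℕ) (hk : 2 ≤ k) (hn : k ≤ n)
    (D : Dgraph) (hD : Dgraph.IsDTree (k - 1) D) (hcard : D.verts.card = n) :
    D.DSaturated k ∧
      D.arcs.card = (n - k + 1).choose 2 + (k - 1) * (2 * n - k) := by
  have hk1 : k - 1 + 1 = k := by omega
  constructor
  · constructor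
    · intro H hsub
      have := sat_a (k - 1) hD H hsub
      rwa [hk1] at this
    · intro u v hmiss
      obtain ⟨H, h1, h2⟩ := sat_b (k - 1) hD u v hmiss
      rw [hk1] at h2
      exact ⟨H, h1, h2⟩
  · have h := (tree_count (k - 1) (by omega) hD).2
    rw [hcard] at h
    have e1 : n - (k - 1) = n - k + 1 := by omega
    have e2 : k - 1 + 1 = k := by omega
    rw [e1, e2] at h
    exact h
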